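/- Let R be an integral domain. Then R is a D-ring if and only if for every nonconstant polynomial f(x) ∈ R[x] there exists a nonzero prime ideal 𝔭 of R and an element k ∈ R such that f(k) ∈ 𝔭. -/

import Mathlib

open Polynomial

/-- An integral domain `R` is a *D-ring* if for all polynomials `f, g ∈ R[x]` such that
`g(k) ∣ f(k)` in `R` for all but finitely many `k ∈ R`, there is a polynomial `q` over the
field of fractions of `R` with `f = q * g` in `K[x]`. -/
def IsDRing (R : Type*) [CommRing R] [IsDomain R] : Prop :=
  ∀ f g : Polynomial R,
    (∀ᶠ k in Filter.cofinite, g.eval k ∣ f.eval k) →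
    ∃ q : Polynomial (FractionRing R),
      f.map (algebraMap R (FractionRing R)) = q * g.map (algebraMap R (FractionRing R))

namespace DRingAux

variable {R : Type*} [CommRing R] [IsDomain R]

omit [IsDomain R] in
lemma one_le_degree_iff {p : Polynomial R} : 1 ≤ p.degree ↔ 0 < p.natDegree := by
  rw [Nat.WithBot.one_le_iff_zero_lt, natDegree_pos_iff_degree_pos]

lemma exists_nonunit (hRF : ¬ IsField R) : ∃ a : R, a ≠ 0 ∧ ¬ IsUnit a := by
  obtain ⟨P, hPbot, hP⟩ := Ring.not_isField_iff_exists_prime.mp hRF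
  obtain ⟨a, haP, ha0⟩ := Submodule.exists_mem_ne_zero_of_ne_bot hPbot
  exact ⟨a, ha0, fun hu => hP.ne_top (Ideal.eq_top_of_isUnit_mem _ haP hu)⟩

lemma exists_avoid (hRF : ¬ IsField R) (B : Finset R) (k₀ : R) (hk₀ : k₀ ∉ B) :
    ∃ e : R, e ≠ 0 ∧ ∀ x : R, e * x + k₀ ∉ B := by
  obtain ⟨a, ha0, hau⟩ := exists_nonunit hRF
  set e := a * ∏ b ∈ B, (k₀ - b) with he
  have he0 : e ≠ 0 := by
    refine mul_ne_zero ha0 (Finset.prod_ne_zero_iff.mpr fun b hb => sub_ne_zero.mpr ?_)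
    rintro rfl; exact hk₀ hb
  refine ⟨e, he0, fun x hx => ?_⟩
  obtain ⟨z, hz⟩ : (k₀ - (e * x + k₀)) ∣ ∏ b ∈ B, (k₀ - b) :=
    Finset.dvd_prod_of_mem _ hx
  have h1 : e * 1 = e * (a * -(x * z)) := by
    calc e * 1 = a * ∏ b ∈ B, (k₀ - b) := by rw [mul_one, he]
    _ = a * ((k₀ - (e * x + k₀)) * z) := by rw [hz]
    _ = e * (a * -(x * z)) := by ring
  exact hau (IsUnit.of_mul_eq_one (a := a) _ (mul_left_cancel₀ he0 h1).symm)

lemma exists_clear_denom (P : Polynomial (FractionRing R)) :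
    ∃ (c : R) (p : Polynomial R), c ≠ 0 ∧
      p.map (algebraMap R (FractionRing R)) = C (algebraMap R (FractionRing R) c) * P := by
  obtain ⟨b, hb⟩ :=
    IsLocalization.integerNormalization_map_to_map (nonZeroDivisors R) P
  refine ⟨b, IsLocalization.integerNormalization (nonZeroDivisors R) P, nonZeroDivisors.ne_zero b.2, ?_⟩
  rw [hb, ← algebraMap_smul (FractionRing R) (b : R) P, Polynomial.smul_eq_C_mul]

lemma key [Infinite R] (hRF : ¬ IsField R)
    (hyp : ∀ f : Polynomial R, 1 ≤ f.degree →
        ∃ 𝔭 : Ideal R, 𝔭.IsPrime ∧ 𝔭 ≠ ⊥ ∧ ∃ k : R, f.eval k ∈ 𝔭)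
    (p : Polynomial R) (hp : 0 < p.natDegree) (m : R) (hm : m ≠ 0)
    (h : ∀ᶠ k in Filter.cofinite, p.eval k ∣ m) : False := by
  have hp0 : p ≠ 0 := fun h0 => by simp [h0] at hp
  have hS : ∀ᶠ k in Filter.cofinite, p.eval k ∣ m ∧ p.eval k ≠ 0 := by
    refine h.and ?_
    rw [Filter.eventually_cofinite]
    exact (finite_setOf_isRoot hp0).subset fun x hx => by
      simpa [IsRoot] using not_not.mp hx
  obtain ⟨k₀, hk₀⟩ := hS.exists
  set s := p.eval k₀ with hs
  have hsm : s ∣ m := hk₀.1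
  have hs0 : s ≠ 0 := hk₀.2
  have hm2 : m ^ 2 ≠ 0 := pow_ne_zero _ hm
  have hmm2 : m ∣ m ^ 2 := ⟨m, sq m⟩
  set G := p.comp (C (m ^ 2) * X + C k₀) with hG
  have hGeval : ∀ k : R, G.eval k = p.eval (m ^ 2 * k + k₀) := fun k => by
    simp [hG, eval_comp]
  have hcoeff : ∀ n, s ∣ G.coeff n := by
    intro n
    cases n with
    | zero =>
      have h0 : G.coeff 0 = s := by
        rw [coeff_zero_eq_eval_zero, hGeval 0, mul_zero, zero_add]
      rw [h0]
    | succ n =>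
      refine hsm.trans (hmm2.trans ?_)
      have hq : Ideal.Quotient.mk (Ideal.span {m ^ 2}) (G.coeff (n + 1)) = 0 := by
        have hmap : G.map (Ideal.Quotient.mk (Ideal.span {m ^ 2})) =
            C ((p.map (Ideal.Quotient.mk (Ideal.span {m ^ 2}))).eval
              (Ideal.Quotient.mk (Ideal.span {m ^ 2}) k₀)) := by
          have h0 : Ideal.Quotient.mk (Ideal.span {m ^ 2}) (m ^ 2) = 0 :=
            Ideal.Quotient.eq_zero_iff_mem.mpr (Ideal.mem_span_singleton_self _)
          rw [hG, Polynomial.map_comp, Polynomial.map_add, Polynomial.map_mul, map_C, map_C,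
            Polynomial.map_X, h0, C_0, zero_mul, zero_add, comp_C]
        have := congrArg (fun q => Polynomial.coeff q (n + 1)) hmap
        simpa [coeff_map] using this
      rwa [Ideal.Quotient.eq_zero_iff_mem, Ideal.mem_span_singleton] at hq
  obtain ⟨H, hH⟩ := (C_dvd_iff_dvd_coeff s G).mpr hcoeff
  have hdegG : G.natDegree = p.natDegree := by
    rw [hG, natDegree_comp, natDegree_linear hm2, mul_one]
  have hdegH : 0 < H.natDegree := by
    have hGH : G.natDegree = H.natDegree := by rw [hH, natDegree_C_mul hs0]
    omega
  have hinj : Function.Injective (fun k : R => m ^ 2 * k + k₀) := by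
    intro a b hab
    simp only [add_left_inj] at hab
    exact mul_left_cancel₀ hm2 hab
  have hEv : ∀ᶠ k in Filter.cofinite, IsUnit (H.eval k) := by
    filter_upwards [hinj.tendsto_cofinite.eventually hS] with k hk
    set w := p.eval (m ^ 2 * k + k₀) with hw
    have hws : m ^ 2 ∣ w - s := by
      have h1 : (m ^ 2 * k + k₀) - k₀ ∣ w - s := sub_dvd_eval_sub _ _ p
      exact (Dvd.intro k (by ring)).trans h1
    have hwm : w ∣ m := hk.1
    have hwsdvd : w ∣ s := by
      have h2 : w ∣ w - s := (hwm.trans hmm2).trans hws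
      have h3 : w ∣ w - (w - s) := dvd_sub (dvd_refl w) h2
      simpa using h3
    obtain ⟨z, hz⟩ := hwsdvd
    have hwG : w = s * H.eval k := by
      rw [hw, ← hGeval, hH, eval_mul, eval_C]
    have h4 : s * 1 = s * (H.eval k * z) := by
      rw [mul_one]
      calc s = w * z := hz
      _ = s * (H.eval k * z) := by rw [hwG]; ring
    exact IsUnit.of_mul_eq_one z (mul_left_cancel₀ hs0 h4).symm
  have hBfin : {k : R | ¬ IsUnit (H.eval k)}.Finite := Filter.eventually_cofinite.mp hEv
  obtain ⟨k₁, hk₁⟩ := hEv.exists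
  have hk₁B : k₁ ∉ hBfin.toFinset := by
    rw [Set.Finite.mem_toFinset]
    exact not_not.mpr hk₁
  obtain ⟨e, he0, he⟩ := exists_avoid hRF hBfin.toFinset k₁ hk₁B
  set P := H.comp (C e * X + C k₁) with hP
  have hPdeg : 1 ≤ P.degree := by
    rw [one_le_degree_iff, hP, natDegree_comp, natDegree_linear he0, mul_one]
    exact hdegH
  obtain ⟨𝔭, h𝔭, h𝔭0, k, hk⟩ := hyp P hPdeg
  have hunit : IsUnit (P.eval k) := by
    rw [hP, eval_comp]
    simp only [eval_add, eval_mul, eval_C, eval_X]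
    have h5 := he k
    rw [Set.Finite.mem_toFinset] at h5
    exact not_not.mp h5
  exact h𝔭.ne_top (Ideal.eq_top_of_isUnit_mem _ hk hunit)

end DRingAux

theorem isDRing_iff_prime_value (R : Type*) [CommRing R] [IsDomain R] :
    IsDRing R ↔
      ∀ f : Polynomial R, 1 ≤ f.degree →
        ∃ 𝔭 : Ideal R, 𝔭.IsPrime ∧ 𝔭 ≠ ⊥ ∧ ∃ k : R, f.eval k ∈ 𝔭 := by
  constructor
  · intro hD f hf
    by_contra hcon
    push_neg at hcon
    have hf0 : f ≠ 0 := fun h0 => by simp [h0] at hf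
    have hunit : ∀ᶠ k in Filter.cofinite, f.eval k ∣ (1 : Polynomial R).eval k := by
      simp only [eval_one]
      by_cases hRF : IsField R
      · have hne : ∀ᶠ k in Filter.cofinite, f.eval k ≠ 0 := by
          rw [Filter.eventually_cofinite]
          exact (finite_setOf_isRoot hf0).subset fun x hx => by
            simpa [IsRoot] using not_not.mp hx
        filter_upwards [hne] with k hk
        obtain ⟨b, hb⟩ := hRF.mul_inv_cancel hk
        exact ⟨b, hb.symm⟩
      · obtain ⟨P, hPbot, hP⟩ := Ring.not_isField_iff_exists_prime.mp hRF
        refine Filter.Eventually.of_forall fun k => ?_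
        have hk0 : f.eval k ≠ 0 := by
          intro h0
          exact hcon P hP hPbot k (h0 ▸ P.zero_mem)
        by_contra hnd
        have hnu : ¬ IsUnit (f.eval k) := fun h => hnd (isUnit_iff_dvd_one.mp h)
        obtain ⟨M, hM, hle⟩ := Ideal.exists_le_maximal (Ideal.span {f.eval k})
          (by rwa [Ne, Ideal.span_singleton_eq_top])
        have hmem : f.eval k ∈ M := hle (Ideal.mem_span_singleton_self _)
        have hMbot : M ≠ ⊥ := fun hbot => hk0 (by
          rw [hbot] at hmem
          simpa using hmem)
        exact hcon M hM.isPrime hMbot k hmem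
    obtain ⟨q, hq⟩ := hD 1 f hunit
    rw [Polynomial.map_one] at hq
    have hdvd : f.map (algebraMap R (FractionRing R)) ∣ 1 := ⟨q, by rw [hq]; ring⟩
    have hdeg0 : (f.map (algebraMap R (FractionRing R))).degree = 0 :=
      degree_eq_zero_of_isUnit (isUnit_of_dvd_one hdvd)
    have hdegF : 1 ≤ (f.map (algebraMap R (FractionRing R))).degree := by
      rwa [degree_map_eq_of_injective (IsFractionRing.injective R _)]
    rw [hdeg0] at hdegF
    exact absurd hdegF (by norm_num)
  · intro hyp f g hfg
    classical
    have hRF : ¬ IsField R := by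
      intro hF
      obtain ⟨𝔭, h𝔭, h𝔭0, -, -⟩ := hyp X (by simp [degree_X])
      letI := hF.toField
      rcases 𝔭.eq_bot_or_top with h | h
      · exact h𝔭0 h
      · exact h𝔭.ne_top h
    have hInf : Infinite R := by
      by_contra hInf
      rw [not_infinite_iff_finite] at hInf
      exact hRF (Finite.isField_of_domain R)
    have hφinj : Function.Injective (algebraMap R (FractionRing R)) :=
      IsFractionRing.injective R (FractionRing R)
    have hmapinj : Function.Injective (Polynomial.map (algebraMap R (FractionRing R))) :=
      Polynomial.map_injective _ hφinj
    by_cases hg : g = 0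
    · have hf : f = 0 := by
        apply Polynomial.eq_zero_of_infinite_isRoot
        have hfin : {k : R | ¬ g.eval k ∣ f.eval k}.Finite := Filter.eventually_cofinite.mp hfg
        refine Set.Infinite.mono ?_ hfin.infinite_compl
        intro x hx
        simp only [Set.mem_compl_iff, Set.mem_setOf_eq, not_not] at hx
        rw [hg, eval_zero, zero_dvd_iff] at hx
        exact hx
      exact ⟨0, by rw [hf, Polynomial.map_zero, zero_mul]⟩
    · set F := f.map (algebraMap R (FractionRing R)) with hF
      set G := g.map (algebraMap R (FractionRing R)) with hGdef
      have hG0 : G ≠ 0 := fun h => hg (hmapinj (by simpa using h))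
      have hl0 : G.leadingCoeff ≠ 0 := leadingCoeff_ne_zero.mpr hG0
      have hG'monic : (G * C G.leadingCoeff⁻¹).Monic := monic_mul_leadingCoeff_inv hG0
      set Rm := F %ₘ (G * C G.leadingCoeff⁻¹) with hRmdef
      have hdiv := modByMonic_add_div F (G * C G.leadingCoeff⁻¹)
      by_cases hRm0 : Rm = 0
      · refine ⟨C G.leadingCoeff⁻¹ * (F /ₘ (G * C G.leadingCoeff⁻¹)), ?_⟩
        conv_lhs => rw [← hdiv]
        rw [← hRmdef, hRm0]
        ring
      · exfalso
        have hdegRm : Rm.degree < G.degree := by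
          have := degree_modByMonic_lt F hG'monic
          rwa [degree_mul_leadingCoeff_inv _ hG0] at this
        obtain ⟨cq, q₁, hcq0, hq₁⟩ :=
          DRingAux.exists_clear_denom (C G.leadingCoeff⁻¹ * (F /ₘ (G * C G.leadingCoeff⁻¹)))
        obtain ⟨cr, r₁, hcr0, hr₁⟩ := DRingAux.exists_clear_denom Rm
        set ρ := C cq * r₁ with hρ
        have hcq' : algebraMap R (FractionRing R) cq ≠ 0 :=
          fun h => hcq0 (hφinj (by simpa using h))
        have hcr' : algebraMap R (FractionRing R) cr ≠ 0 :=
          fun h => hcr0 (hφinj (by simpa using h))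
        have hρmap : ρ.map (algebraMap R (FractionRing R)) =
            C (algebraMap R (FractionRing R) cq) * C (algebraMap R (FractionRing R) cr) * Rm := by
          rw [hρ, Polynomial.map_mul, map_C, hr₁]
          ring
        have hρ0 : ρ ≠ 0 := by
          intro h0
          apply hRm0
          have h1 := congrArg (Polynomial.map (algebraMap R (FractionRing R))) h0
          rw [hρmap, Polynomial.map_zero] at h1
          exact (mul_eq_zero.mp h1).resolve_left
            (mul_ne_zero (C_ne_zero.mpr hcq') (C_ne_zero.mpr hcr'))
        have hident : C (cq * cr) * f = g * (C cr * q₁) + ρ := by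
          apply hmapinj
          simp only [Polynomial.map_mul, Polynomial.map_add, map_C, C_mul, map_mul]
          rw [hq₁, hρmap]
          linear_combination (C (algebraMap R (FractionRing R) cq) *
            C (algebraMap R (FractionRing R) cr)) * hdiv.symm
        have hgρ : ∀ᶠ k in Filter.cofinite, g.eval k ∣ ρ.eval k := by
          filter_upwards [hfg] with k hk
          have hev := congrArg (Polynomial.eval k) hident
          simp only [eval_mul, eval_add, eval_C] at hev
          have h2 : g.eval k ∣ cq * cr * f.eval k := hk.mul_left _
          have h3 : ρ.eval k = cq * cr * f.eval k - g.eval k * (cr * q₁.eval k) := by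
            linear_combination -hev
          rw [h3]
          exact dvd_sub h2 (Dvd.intro _ rfl)
        set P := ρ.map (algebraMap R (FractionRing R)) with hPdef
        have hP0 : P ≠ 0 := fun h => hρ0 (hmapinj (by simpa using h))
        set D := EuclideanDomain.gcd G P with hDdef
        have hD0 : D ≠ 0 := by
          rw [hDdef, Ne, EuclideanDomain.gcd_eq_zero_iff]
          tauto
        obtain ⟨G₁, hG₁⟩ := EuclideanDomain.gcd_dvd_left G P
        obtain ⟨R₁, hR₁⟩ := EuclideanDomain.gcd_dvd_right G P
        have hBez := EuclideanDomain.gcd_eq_gcd_ab G P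
        set A := EuclideanDomain.gcdA G P with hA
        set Bz := EuclideanDomain.gcdB G P with hBz
        have hBez1 : G₁ * A + R₁ * Bz = 1 := by
          have h2 : D * (G₁ * A + R₁ * Bz) = D * 1 := by
            rw [mul_one]
            linear_combination -hBez - A * hG₁ - Bz * hR₁
          exact mul_left_cancel₀ hD0 h2
        have hdegP : P.degree < G.degree := by
          rw [hρmap, ← C_mul, degree_C_mul (mul_ne_zero hcq' hcr')]
          exact hdegRm
        have hG₁0 : G₁ ≠ 0 := fun h => hG0 (by rw [hG₁, h, mul_zero])
        have hR₁0 : R₁ ≠ 0 := fun h => hP0 (by rw [hR₁, h, mul_zero])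
        have hdegD : D.degree ≤ P.degree :=
          degree_le_of_dvd (EuclideanDomain.gcd_dvd_right G P) hP0
        have hG₁deg : 0 < G₁.natDegree := by
          by_contra hcon
          push_neg at hcon
          have hG₁d : G₁.degree = 0 := by
            rw [Nat.le_zero] at hcon
            exact (degree_eq_natDegree hG₁0).trans (by rw [hcon]; rfl)
          have : G.degree = D.degree := by
            rw [hG₁, degree_mul, hG₁d, add_zero]
          rw [this] at hdegP
          exact absurd (hdegD.trans_lt hdegP) (lt_irrefl _)
        obtain ⟨cg, g₁, hcg0, hg₁⟩ := DRingAux.exists_clear_denom G₁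
        obtain ⟨cd, d₁, hcd0, hd₁⟩ := DRingAux.exists_clear_denom D
        obtain ⟨cr2, r₂, hcr20, hr₂⟩ := DRingAux.exists_clear_denom R₁
        obtain ⟨cu, u₁, hcu0, hu₁⟩ := DRingAux.exists_clear_denom A
        obtain ⟨cv, v₁, hcv0, hv₁⟩ := DRingAux.exists_clear_denom Bz
        have hid1 : d₁ * g₁ = C (cd * cg) * g := by
          apply hmapinj
          rw [Polynomial.map_mul, Polynomial.map_mul, map_C, hd₁, hg₁]
          simp only [map_mul, C_mul]
          linear_combination -(C (algebraMap R (FractionRing R) cd) * C (algebraMap R (FractionRing R) cg)) * hG₁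
        have hid2 : d₁ * r₂ = C (cd * cr2) * ρ := by
          apply hmapinj
          rw [Polynomial.map_mul, Polynomial.map_mul, map_C, hd₁, hr₂]
          simp only [map_mul, C_mul]
          linear_combination -(C (algebraMap R (FractionRing R) cd) * C (algebraMap R (FractionRing R) cr2)) * hR₁
        have hid3 : u₁ * g₁ * C (cv * cr2) + v₁ * r₂ * C (cu * cg) =
            C (cu * cg * cv * cr2) := by
          apply hmapinj
          rw [Polynomial.map_add, Polynomial.map_mul, Polynomial.map_mul,
            Polynomial.map_mul, Polynomial.map_mul, map_C, map_C, map_C,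
            hu₁, hg₁, hv₁, hr₂]
          simp only [map_mul]
          linear_combination (C (algebraMap R (FractionRing R) cu) * C (algebraMap R (FractionRing R) cg) * C (algebraMap R (FractionRing R) cv) * C (algebraMap R (FractionRing R) cr2)) * hBez1
        have hd₁0 : d₁ ≠ 0 := by
          intro h0
          apply hD0
          have := congrArg (Polynomial.map (algebraMap R (FractionRing R))) h0
          rw [hd₁, Polynomial.map_zero] at this
          rcases mul_eq_zero.mp this with h | h
          · exact absurd h (by
              simp only [Ne, C_eq_zero]
              exact fun hh => hcd0 (hφinj (by simpa using hh)))
          · exact h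
        have hm0 : cd * cg * (cu * cg * cv * cr2) ≠ 0 := by
          repeat' apply mul_ne_zero
          all_goals assumption
        have hfinal : ∀ᶠ k in Filter.cofinite, g₁.eval k ∣ cd * cg * (cu * cg * cv * cr2) := by
          have hd₁ev : ∀ᶠ k in Filter.cofinite, d₁.eval k ≠ 0 := by
            rw [Filter.eventually_cofinite]
            exact (finite_setOf_isRoot hd₁0).subset fun x hx => by
              simpa [IsRoot] using not_not.mp hx
          filter_upwards [hgρ, hd₁ev] with k hk hdk
          have e1 := congrArg (Polynomial.eval k) hid1
          have e2 := congrArg (Polynomial.eval k) hid2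
          have e3 := congrArg (Polynomial.eval k) hid3
          simp only [eval_mul, eval_add, eval_C] at e1 e2 e3
          have hmuls : d₁.eval k * (cd * cr2 * g₁.eval k) ∣
              d₁.eval k * (cd * cg * r₂.eval k) := by
            have hbig : (cd * cr2) * (cd * cg * g.eval k) ∣
                (cd * cg) * (cd * cr2 * ρ.eval k) := by
              have := mul_dvd_mul_left (cd * cr2 * (cd * cg)) hk
              have hl : cd * cr2 * (cd * cg) * g.eval k =
                  cd * cr2 * (cd * cg * g.eval k) := by ring
              have hr : cd * cr2 * (cd * cg) * ρ.eval k =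
                  cd * cg * (cd * cr2 * ρ.eval k) := by ring
              rwa [hl, hr] at this
            have hl2 : d₁.eval k * (cd * cr2 * g₁.eval k) =
                cd * cr2 * (cd * cg * g.eval k) := by linear_combination (cd * cr2) * e1
            have hr2 : d₁.eval k * (cd * cg * r₂.eval k) =
                cd * cg * (cd * cr2 * ρ.eval k) := by linear_combination (cd * cg) * e2
            rw [hl2, hr2]
            exact hbig
          have hstep : cd * cr2 * g₁.eval k ∣ cd * cg * r₂.eval k :=
            (mul_dvd_mul_iff_left hdk).mp hmuls
          have hstep2 : g₁.eval k ∣ cd * cg * r₂.eval k :=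
            (Dvd.intro_left _ rfl).trans hstep
          obtain ⟨t, ht⟩ := hstep2
          refine ⟨cd * cg * u₁.eval k * (cv * cr2) + t * (v₁.eval k * (cu * cg)), ?_⟩
          linear_combination (cd * cg) * e3.symm + (v₁.eval k * (cu * cg)) * ht
        have hg₁deg : 0 < g₁.natDegree := by
          have : (g₁.map (algebraMap R (FractionRing R))).natDegree = g₁.natDegree :=
            natDegree_map_eq_of_injective hφinj g₁
          rw [hg₁] at this
          rw [← this, natDegree_C_mul (fun hh => hcg0 (hφinj (by simpa using hh)))]
          exact hG₁deg
        exact DRingAux.key hRF hyp g₁ hg₁deg _ hm0 hfinal
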